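/- arXiv:2204.01479 — 2 statements merged into one kernel-verified Lean document; each statement's English description precedes it below -/
import Mathlib

section
/- Let s̄ : ℤ → ℤ be ultimately periodic with parameters (t_p, ν̄, τ̄) where ν̄ > 0 and τ̄ ≥ 1. Define s''(t) = min over i ≥ t of s̄(i) (this minimum exists for every t since ν̄ > 0). Then for all t ≥ t_p, s''(t) = min_{t ≤ i ≤ t+τ̄−1} s̄(i), and s'' is ultimately periodic with parameters (t_p, ν̄, τ̄): s''(t + kτ̄) = kν̄ + s''(t) for all t ≥ t_p and k ≥ 0. -/
private lemma sInf_const_add_img (c : ℤ) (S : Set ℤ) (hne : S.Nonempty) (hbd : BddBelow S) :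
    sInf ((fun x => c + x) '' S) = c + sInf S := by
  have hTne : ((fun x => c + x) '' S).Nonempty := hne.image _
  have hTbd : BddBelow ((fun x => c + x) '' S) := by
    obtain ⟨b, hb⟩ := hbd
    exact ⟨c + b, by rintro y ⟨x, hx, rfl⟩; exact add_le_add_right (hb hx) c⟩
  apply le_antisymm
  · have h1 : sInf ((fun x => c + x) '' S) - c ≤ sInf S := by
      apply le_csInf hne
      intro x hx
      have h := csInf_le hTbd ⟨x, hx, rfl⟩
      simp only at h
      linarith
    linarith
  · apply le_csInf hTne
    rintro y ⟨x, hx, rfl⟩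
    exact add_le_add_right (csInf_le hbd hx) c

/-- For an ultimately periodic series `s̄` with positive gain, the upper running minimum
`s''(t) = min_{i ≥ t} s̄(i)` satisfies, for `t ≥ t_p`, `s'' t = min_{t ≤ i ≤ t+τ̄−1} s̄ i`,
and `s''` is ultimately periodic with the same parameters `(t_p, ν̄, τ̄)`. -/
theorem upper_running_min_periodic
    (sbar : ℤ → ℤ) (tp νbar τbar : ℤ)
    (hν : 0 < νbar) (hτ : 1 ≤ τbar)
    (hper : ∀ t ≥ tp, ∀ k : ℕ, sbar (t + k * τbar) = k * νbar + sbar t)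
    (s'' : ℤ → ℤ)
    (hs'' : ∀ t : ℤ, s'' t = sInf (sbar '' Set.Ici t)) :
    (∀ t ≥ tp, s'' t = sInf (sbar '' Set.Icc t (t + τbar - 1))) ∧
    (∀ t ≥ tp, ∀ k : ℕ, s'' (t + k * τbar) = k * νbar + s'' t) := by
  have hτ0 : 0 < τbar := by linarith
  -- decomposition: any point i ≥ t is dominated below by a point in the window
  have decomp : ∀ t ≥ tp, ∀ i ≥ t, ∃ j ∈ Set.Icc t (t + τbar - 1), sbar j ≤ sbar i := by
    intro t ht i hi
    set r := (i - t) % τbar with hr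
    set q := (i - t) / τbar with hq
    have hq0 : 0 ≤ q := Int.ediv_nonneg (by linarith) hτ0.le
    have hr0 : 0 ≤ r := Int.emod_nonneg _ (ne_of_gt hτ0)
    have hr1 : r < τbar := Int.emod_lt_of_pos _ hτ0
    have hed : q * τbar + r = i - t := by rw [hq, hr]; linarith [Int.ediv_mul_add_emod (i - t) τbar]
    have hi' : i = (t + r) + q * τbar := by linarith
    refine ⟨t + r, ⟨by linarith, by linarith⟩, ?_⟩
    have hjt : t + r ≥ tp := by linarith
    have hp := hper (t + r) hjt q.toNat
    rw [Int.toNat_of_nonneg hq0] at hp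
    rw [hi', hp]
    nlinarith
  have hwin : ∀ t ≥ tp, (sbar '' Set.Icc t (t + τbar - 1)).Nonempty ∧
      BddBelow (sbar '' Set.Icc t (t + τbar - 1)) := by
    intro t _
    constructor
    · exact ⟨sbar t, t, ⟨le_refl t, by linarith⟩, rfl⟩
    · exact ((Set.finite_Icc t (t + τbar - 1)).image sbar).bddBelow
  have hIne : ∀ t : ℤ, (sbar '' Set.Ici t).Nonempty := fun t => ⟨sbar t, t, le_refl t, rfl⟩
  have hIbd : ∀ t ≥ tp, BddBelow (sbar '' Set.Ici t) := by
    intro t ht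
    obtain ⟨hBne, hBbd⟩ := hwin t ht
    refine ⟨sInf (sbar '' Set.Icc t (t + τbar - 1)), ?_⟩
    rintro y ⟨i, hi, rfl⟩
    obtain ⟨j, hj, hle⟩ := decomp t ht i hi
    exact le_trans (csInf_le hBbd ⟨j, hj, rfl⟩) hle
  have part1 : ∀ t ≥ tp, s'' t = sInf (sbar '' Set.Icc t (t + τbar - 1)) := by
    intro t ht
    obtain ⟨hBne, hBbd⟩ := hwin t ht
    rw [hs'']
    apply le_antisymm
    · apply le_csInf hBne
      rintro y ⟨j, hj, rfl⟩
      exact csInf_le (hIbd t ht) ⟨j, hj.1, rfl⟩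
    · apply le_csInf (hIne t)
      rintro y ⟨i, hi, rfl⟩
      obtain ⟨j, hj, hle⟩ := decomp t ht i hi
      exact le_trans (csInf_le hBbd ⟨j, hj, rfl⟩) hle
  refine ⟨part1, ?_⟩
  intro t ht k
  have hkτ : 0 ≤ (k : ℤ) * τbar := mul_nonneg (Int.ofNat_nonneg k) hτ0.le
  have hset : sbar '' Set.Ici (t + k * τbar) = (fun x => (k : ℤ) * νbar + x) '' (sbar '' Set.Ici t) := by
    ext y
    constructor
    · rintro ⟨i, hi, rfl⟩
      have hi' : i - k * τbar ≥ t := by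
        simp only [Set.mem_Ici] at hi; linarith
      have hp := hper (i - k * τbar) (by linarith) k
      refine ⟨sbar (i - k * τbar), ⟨i - k * τbar, hi', rfl⟩, ?_⟩
      simp only
      rw [← hp]
      ring_nf
    · rintro ⟨_, ⟨j, hj, rfl⟩, rfl⟩
      have hp := hper j (le_trans ht hj) k
      exact ⟨j + k * τbar, by simp only [Set.mem_Ici] at hj ⊢; linarith, hp⟩
  rw [hs'', hs'', hset, sInf_const_add_img _ _ (hIne t) (hIbd t ht)]
end

section
/- Dual residual of a monomial by a polynomial: let p = ⊕_{i=1}^m nᵢδ^{tᵢ} be a polynomial counter with n₁ < ... < n_m, t₁ < ... < t_m ∈ ℤ, and r = νδ^τ a monomial with ν ∈ ℤ and τ ≤ t_m. Let j be the smallest index with tⱼ ≥ τ. Then the least counter x with p ⊙ x ⪰ r (pointwise-greatest non-decreasing x : ℤ → ℤ∪{+∞} with p(t) + x(t) ≤ r(t) for all t) is x(t) = ν − nⱼ for t ≤ τ and x(t) = +∞ for t > τ, i.e., r ⊙♭ p = (ν − nⱼ)δ^τ = ⋀_{i=j}^m (ν − nᵢ)δ^τ. -/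
/-- Dual residual of a monomial by a polynomial counter.  The polynomial
`p = ⊕_i nᵢδ^{tᵢ}` is the map `p t = min {nᵢ | t ≤ tᵢ}` (`+∞` after `t_m`), with `n`,
`tt` strictly increasing, and `r = νδ^τ`.  Let `j` be the smallest index with `tⱼ ≥ τ`
(its existence in `Fin (m+1)` encodes `τ ≤ t_m`).  Then the pointwise-greatest
non-decreasing `x : ℤ → ℤ ∪ {+∞}` with `p(t) + x(t) ≤ r(t)` for all `t` is
`x* = (ν − nⱼ)δ^τ`, i.e. `x*(t) = ν − nⱼ` for `t ≤ τ` and `+∞` after. -/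
theorem dual_residual_monomial_poly (m : ℕ) (n tt : Fin (m + 1) → ℤ)
    (hn : StrictMono n) (htt : StrictMono tt)
    (ν τ : ℤ) (j : Fin (m + 1))
    (hj : ∀ i : Fin (m + 1), ((j : ℕ) ≤ (i : ℕ) ↔ τ ≤ tt i)) :
    IsGreatest
      {x : ℤ → WithTop ℤ | Monotone x ∧
        ∀ t : ℤ,
          (Finset.univ.filter (fun i : Fin (m + 1) => t ≤ tt i)).inf
              (fun i => ((n i : ℤ) : WithTop ℤ))
            + x t
          ≤ (if t ≤ τ then (ν : WithTop ℤ) else ⊤)}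
      (fun t : ℤ => if t ≤ τ then ((ν - n j : ℤ) : WithTop ℤ) else ⊤) := by
  have hτj : τ ≤ tt j := (hj j).mp le_rfl
  constructor
  · refine ⟨?_, ?_⟩
    · intro a b hab
      by_cases ha : a ≤ τ <;> by_cases hb : b ≤ τ <;> simp [ha, hb, le_top]
      exact ha (hab.trans hb)
    · intro t
      by_cases ht : t ≤ τ
      · simp only [if_pos ht]
        have hjmem : j ∈ Finset.univ.filter (fun i : Fin (m+1) => t ≤ tt i) := by
          simp [ht.trans hτj]
        have hinf : (Finset.univ.filter fun i : Fin (m+1) => t ≤ tt i).inf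
            (fun i => ((n i : ℤ) : WithTop ℤ)) ≤ ((n j : ℤ) : WithTop ℤ) :=
          Finset.inf_le hjmem
        calc _ ≤ ((n j : ℤ) : WithTop ℤ) + ((ν - n j : ℤ) : WithTop ℤ) :=
              add_le_add_left hinf _
          _ = (ν : WithTop ℤ) := by
              rw [← WithTop.coe_add]; norm_num
      · simp [ht]
  · rintro x ⟨hmono, hx⟩ t
    by_cases ht : t ≤ τ
    · simp only [if_pos ht]
      have h := hx τ
      simp only [if_pos le_rfl] at h
      have hinf : (Finset.univ.filter fun i : Fin (m+1) => τ ≤ tt i).inf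
          (fun i => ((n i : ℤ) : WithTop ℤ)) = ((n j : ℤ) : WithTop ℤ) := by
        apply le_antisymm
        · exact Finset.inf_le (by simp [hτj])
        · apply Finset.le_inf
          intro i hi
          simp only [Finset.mem_filter] at hi
          exact_mod_cast hn.monotone (Fin.le_def.mpr ((hj i).mpr hi.2))
      rw [hinf] at h
      have hxτ : x τ ≤ ((ν - n j : ℤ) : WithTop ℤ) := by
        cases hxt : x τ with
        | top => rw [hxt] at h; simp at h
        | coe a =>
          rw [hxt] at h
          have ha : n j + a ≤ ν := by exact_mod_cast h
          exact_mod_cast (by linarith : a ≤ ν - n j)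
      exact (hmono ht).trans hxτ
    · simp [ht]
end
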